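/- arXiv:2401.00264 — 7 statements merged into one kernel-verified Lean document; each statement's English description precedes it below -/
import Mathlib

section
/- Bounds on counterfactual conditional choice probabilities: in the panel binary choice model, fix a covariate realization w = (w_1, …, w_T) with P(W = w) > 0 and a counterfactual covariate value w̃. Define the counterfactual period-t conditional choice probability p̃_t(w̃) := P( v_t ≤ w̃_t·θ₀ │ W = w ), obtained by changing the utility index from w_t·θ₀ to w̃_t·θ₀ while holding the conditional error distribution given W = w fixed. Then for every c ∈ ℝ: P( Y_t = 1 and w_t·θ₀ ≤ c │ W = w ) ≤ P( v_t ≤ c │ W = w ) ≤ 1 − P( Y_t = 0 and w_t·θ₀ ≥ c │ W = w ); in particular, taking c = w̃_t·θ₀ yields P( Y_t = 1 and w_t·θ₀ ≤ w̃_t·θ₀ │ W = w ) ≤ p̃_t(w̃) ≤ 1 − P( Y_t = 0 and w_t·θ₀ ≥ w̃_t·θ₀ │ W = w ). -/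
open MeasureTheory Matrix

/-- Bounds on counterfactual conditional choice probabilities in the
panel binary choice model `Y_t = 1{v_t ≤ W_t·θ₀}`. Fix a covariate realization
`w = (w_1, …, w_T)` with `P(W = w) > 0` and a counterfactual value `wtil`. With the
counterfactual CCP `p̃_t(wtil) := P(v_t ≤ wtil_t·θ₀ │ W = w)`, for every `c ∈ ℝ`:
`P(Y_t = 1 ∧ w_t·θ₀ ≤ c │ W = w) ≤ P(v_t ≤ c │ W = w)
  ≤ 1 − P(Y_t = 0 ∧ w_t·θ₀ ≥ c │ W = w)`,
and in particular, with `c = wtil_t·θ₀`,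
`P(Y_t = 1 ∧ w_t·θ₀ ≤ wtil_t·θ₀ │ W = w) ≤ p̃_t(wtil)
  ≤ 1 − P(Y_t = 0 ∧ w_t·θ₀ ≥ wtil_t·θ₀ │ W = w)`.
Conditional probabilities are ordinary ratios against the positive-probability
event `{W = w}`. -/
theorem stmt_13
    {Ω : Type*} [MeasurableSpace Ω] (P : Measure Ω) [IsProbabilityMeasure P]
    {T dw : ℕ}
    (W : Fin T → Ω → (Fin dw → ℝ)) (v : Fin T → Ω → ℝ)
    (hW : ∀ t, Measurable (W t)) (hv : ∀ t, Measurable (v t))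
    (θ₀ : Fin dw → ℝ)
    (Y : Fin T → Ω → ℝ)
    (hY : ∀ t ω, Y t ω = if v t ω ≤ W t ω ⬝ᵥ θ₀ then 1 else 0)
    (w wtil : Fin T → (Fin dw → ℝ))
    (hw : 0 < P {ω | (fun t => W t ω) = w}) :
    ∀ t : Fin T,
      (∀ c : ℝ,
        (P {ω | (Y t ω = 1 ∧ w t ⬝ᵥ θ₀ ≤ c) ∧ (fun t' => W t' ω) = w}).toReal
            / (P {ω | (fun t' => W t' ω) = w}).toReal
          ≤ (P {ω | v t ω ≤ c ∧ (fun t' => W t' ω) = w}).toReal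
            / (P {ω | (fun t' => W t' ω) = w}).toReal ∧
        (P {ω | v t ω ≤ c ∧ (fun t' => W t' ω) = w}).toReal
            / (P {ω | (fun t' => W t' ω) = w}).toReal
          ≤ 1 - (P {ω | (Y t ω = 0 ∧ c ≤ w t ⬝ᵥ θ₀) ∧ (fun t' => W t' ω) = w}).toReal
            / (P {ω | (fun t' => W t' ω) = w}).toReal) ∧
      ((P {ω | (Y t ω = 1 ∧ w t ⬝ᵥ θ₀ ≤ wtil t ⬝ᵥ θ₀) ∧
            (fun t' => W t' ω) = w}).toReal
          / (P {ω | (fun t' => W t' ω) = w}).toReal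
        ≤ (P {ω | v t ω ≤ wtil t ⬝ᵥ θ₀ ∧ (fun t' => W t' ω) = w}).toReal
          / (P {ω | (fun t' => W t' ω) = w}).toReal ∧
       (P {ω | v t ω ≤ wtil t ⬝ᵥ θ₀ ∧ (fun t' => W t' ω) = w}).toReal
          / (P {ω | (fun t' => W t' ω) = w}).toReal
        ≤ 1 - (P {ω | (Y t ω = 0 ∧ wtil t ⬝ᵥ θ₀ ≤ w t ⬝ᵥ θ₀) ∧
              (fun t' => W t' ω) = w}).toReal
          / (P {ω | (fun t' => W t' ω) = w}).toReal) := by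

  intro t
  have hE0 : 0 < (P {ω | (fun t' => W t' ω) = w}).toReal :=
    ENNReal.toReal_pos hw.ne' (measure_ne_top _ _)
  have main : ∀ c : ℝ,
      (P {ω | (Y t ω = 1 ∧ w t ⬝ᵥ θ₀ ≤ c) ∧ (fun t' => W t' ω) = w}).toReal
          / (P {ω | (fun t' => W t' ω) = w}).toReal
        ≤ (P {ω | v t ω ≤ c ∧ (fun t' => W t' ω) = w}).toReal
          / (P {ω | (fun t' => W t' ω) = w}).toReal ∧
      (P {ω | v t ω ≤ c ∧ (fun t' => W t' ω) = w}).toReal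
          / (P {ω | (fun t' => W t' ω) = w}).toReal
        ≤ 1 - (P {ω | (Y t ω = 0 ∧ c ≤ w t ⬝ᵥ θ₀) ∧ (fun t' => W t' ω) = w}).toReal
          / (P {ω | (fun t' => W t' ω) = w}).toReal := by
    intro c
    constructor
    · -- lower bound: subset argument
      refine div_le_div_of_nonneg_right ?_ hE0.le
      refine ENNReal.toReal_mono (measure_ne_top _ _) (measure_mono ?_)
      rintro ω ⟨⟨hY1, hle⟩, hWω⟩
      refine ⟨?_, hWω⟩
      rw [hY t ω] at hY1
      by_cases hvc : v t ω ≤ W t ω ⬝ᵥ θ₀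
      · have : W t ω = w t := congrFun hWω t
        calc v t ω ≤ W t ω ⬝ᵥ θ₀ := hvc
          _ = w t ⬝ᵥ θ₀ := by rw [this]
          _ ≤ c := hle
      · simp [hvc] at hY1
    · -- upper bound: disjointness argument
      set S := {ω | v t ω ≤ c ∧ (fun t' => W t' ω) = w} with hS
      set B := {ω | (Y t ω = 0 ∧ c ≤ w t ⬝ᵥ θ₀) ∧ (fun t' => W t' ω) = w} with hB
      have hBmeas : MeasurableSet B := by
        have h1 : B = ({ω | W t ω ⬝ᵥ θ₀ < v t ω} ∩ {ω | c ≤ w t ⬝ᵥ θ₀})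
            ∩ ((fun ω => (fun t' => W t' ω)) ⁻¹' {w}) := by
          ext ω
          simp only [hB, Set.mem_setOf_eq, Set.mem_inter_iff, Set.mem_preimage,
            Set.mem_singleton_iff, hY t ω]
          constructor
          · rintro ⟨⟨hY0, hc⟩, hWω⟩
            refine ⟨⟨?_, hc⟩, hWω⟩
            by_contra h
            push_neg at h
            simp [h] at hY0
          · rintro ⟨⟨hlt, hc⟩, hWω⟩
            exact ⟨⟨by simp [not_le.mpr hlt], hc⟩, hWω⟩
        rw [h1]
        refine MeasurableSet.inter (MeasurableSet.inter ?_ ?_) ?_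
        · exact measurableSet_lt (by
            apply Finset.measurable_sum
            intro i _
            exact ((hW t).eval (a := i)).mul_const _) (hv t)
        · exact MeasurableSet.const _
        · exact (measurable_pi_lambda _ (fun t' => hW t')) (MeasurableSet.singleton w)
      have hdisj : Disjoint S B := by
        rw [Set.disjoint_left]
        rintro ω ⟨hvc, hWω⟩ ⟨⟨hY0, hc⟩, _⟩
        rw [hY t ω] at hY0
        by_cases hvw : v t ω ≤ W t ω ⬝ᵥ θ₀
        · simp [hvw] at hY0
        · have hWt : W t ω = w t := congrFun hWω t
          rw [hWt] at hvw
          exact hvw (hvc.trans hc)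
      have hsub : S ∪ B ⊆ {ω | (fun t' => W t' ω) = w} := by
        rintro ω (⟨_, h⟩ | ⟨_, h⟩) <;> exact h
      have hsum : (P S).toReal + (P B).toReal ≤ (P {ω | (fun t' => W t' ω) = w}).toReal := by
        rw [← ENNReal.toReal_add (measure_ne_top _ _) (measure_ne_top _ _)]
        apply ENNReal.toReal_mono (measure_ne_top _ _)
        rw [← measure_union hdisj hBmeas]
        exact measure_mono hsub
      have h1 : ((P S).toReal + (P B).toReal) / (P {ω | (fun t' => W t' ω) = w}).toReal ≤ 1 :=
        (div_le_one hE0).mpr hsum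
      rw [add_div] at h1
      linarith
  exact ⟨main, main (wtil t ⬝ᵥ θ₀)⟩
end

section
/- Equivalence with Manski's maximum-score restriction: let z_t, z_s ∈ ℝ^{d}, β ∈ ℝ^{d}, and p_t, p_s ∈ [0,1] (interpreted as the conditional choice probabilities P(Y_t = 1│z) and P(Y_s = 1│z) in a model with no endogenous covariates). Then the family of inequalities [ for all c ∈ ℝ: p_t·1{z_t·β ≤ c} ≤ 1 − (1 − p_s)·1{z_s·β ≥ c} ] holds if and only if the maximum-score-type implication [ z_s·β ≥ z_t·β ⟹ p_t ≤ p_s ] holds. -/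
open Matrix

/-- Equivalence with Manski's maximum-score restriction. For covariate
realizations `z_t, z_s ∈ ℝ^d`, a coefficient `β ∈ ℝ^d`, and conditional choice
probabilities `p_t, p_s ∈ [0,1]`, the family of inequalities
`∀ c ∈ ℝ, p_t·1{z_t·β ≤ c} ≤ 1 − (1 − p_s)·1{z_s·β ≥ c}`
holds if and only if the maximum-score-type implication
`z_s·β ≥ z_t·β ⟹ p_t ≤ p_s` holds. -/
theorem stmt_14
    {d : ℕ} (zt zs : Fin d → ℝ) (β : Fin d → ℝ)
    (pt ps : ℝ)
    (hpt : 0 ≤ pt ∧ pt ≤ 1) (hps : 0 ≤ ps ∧ ps ≤ 1) :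
    (∀ c : ℝ,
        pt * (if zt ⬝ᵥ β ≤ c then (1 : ℝ) else 0)
          ≤ 1 - (1 - ps) * (if c ≤ zs ⬝ᵥ β then (1 : ℝ) else 0))
      ↔ (zt ⬝ᵥ β ≤ zs ⬝ᵥ β → pt ≤ ps) := by
  constructor
  · intro h hle
    have := h (zt ⬝ᵥ β)
    simp [le_refl, if_pos hle] at this
    linarith
  · intro h c
    by_cases h1 : zt ⬝ᵥ β ≤ c <;> by_cases h2 : c ≤ zs ⬝ᵥ β <;>
      simp [h1, h2] <;> first
      | linarith [h (le_trans h1 h2)]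
      | linarith [hpt.1, hpt.2, hps.1, hps.2]
end

section
/- Derivation of the KPT(v) restriction: let p, q, γ ∈ ℝ and a₁₁, a₁₀, d₁₁, d₁₀ ∈ [0,1] (interpreted in the AR(1) dynamic binary choice model as p = z_t·β₀, q = z_s·β₀, γ = γ₀, a₁₁ = P(Y_t = 1, Y_{t−1} = 1│z), a₁₀ = P(Y_t = 1, Y_{t−1} = 0│z), d₁₁ = P(Y_s = 0, Y_{s−1} = 1│z), d₁₀ = P(Y_s = 0, Y_{s−1} = 0│z)). Suppose that for every c ∈ ℝ: a₁₁·1{p + γ ≤ c} + a₁₀·1{p ≤ c} ≤ 1 − d₁₁·1{q + γ ≥ c} − d₁₀·1{q ≥ c}. Then a₁₁ > 1 − d₁₁ implies p > q. -/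
/-- Derivation of the KPT(v) restriction. Let `p, q, γ ∈ ℝ` and
`a₁₁, a₁₀, d₁₁, d₁₀ ∈ [0,1]`. If for every `c ∈ ℝ`,
`a₁₁·1{p + γ ≤ c} + a₁₀·1{p ≤ c} ≤ 1 − d₁₁·1{q + γ ≥ c} − d₁₀·1{q ≥ c}`,
then `a₁₁ > 1 − d₁₁` implies `p > q`. -/
theorem stmt_15
    (p q γ : ℝ) (a11 a10 d11 d10 : ℝ)
    (ha11 : 0 ≤ a11 ∧ a11 ≤ 1) (ha10 : 0 ≤ a10 ∧ a10 ≤ 1)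
    (hd11 : 0 ≤ d11 ∧ d11 ≤ 1) (hd10 : 0 ≤ d10 ∧ d10 ≤ 1)
    (hineq : ∀ c : ℝ,
      a11 * (if p + γ ≤ c then (1 : ℝ) else 0) + a10 * (if p ≤ c then (1 : ℝ) else 0)
        ≤ 1 - d11 * (if c ≤ q + γ then (1 : ℝ) else 0)
            - d10 * (if c ≤ q then (1 : ℝ) else 0)) :
    1 - d11 < a11 → q < p := by
  intro h
  by_contra hpq
  push_neg at hpq
  have := hineq (p + γ)
  simp only [le_refl, if_pos, add_le_add_iff_right, hpq, if_true] at this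
  have h10 : (0:ℝ) ≤ a10 * (if p ≤ p + γ then (1 : ℝ) else 0) :=
    mul_nonneg ha10.1 (by split <;> norm_num)
  have hd : (0:ℝ) ≤ d10 * (if p + γ ≤ q then (1 : ℝ) else 0) :=
    mul_nonneg hd10.1 (by split <;> norm_num)
  nlinarith
end

section
/- Derivation of the KPT(i) restriction: let p, q, γ ∈ ℝ and a₁₁, a₁₀, d₁₁, d₁₀ ∈ [0,1]. Suppose that for every c ∈ ℝ: a₁₁·1{p + γ ≤ c} + a₁₀·1{p ≤ c} ≤ 1 − d₁₁·1{q + γ ≥ c} − d₁₀·1{q ≥ c}. Then a₁₁ + a₁₀ > 1 − d₁₁ − d₁₀ implies (p − q) + |γ| > 0. -/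
/-- Derivation of the KPT(i) restriction. Let `p, q, γ ∈ ℝ` and
`a₁₁, a₁₀, d₁₁, d₁₀ ∈ [0,1]`. If for every `c ∈ ℝ`,
`a₁₁·1{p + γ ≤ c} + a₁₀·1{p ≤ c} ≤ 1 − d₁₁·1{q + γ ≥ c} − d₁₀·1{q ≥ c}`,
then `a₁₁ + a₁₀ > 1 − d₁₁ − d₁₀` implies `(p − q) + |γ| > 0`. -/
theorem stmt_16
    (p q γ : ℝ) (a11 a10 d11 d10 : ℝ)
    (ha11 : 0 ≤ a11 ∧ a11 ≤ 1) (ha10 : 0 ≤ a10 ∧ a10 ≤ 1)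
    (hd11 : 0 ≤ d11 ∧ d11 ≤ 1) (hd10 : 0 ≤ d10 ∧ d10 ≤ 1)
    (hineq : ∀ c : ℝ,
      a11 * (if p + γ ≤ c then (1 : ℝ) else 0) + a10 * (if p ≤ c then (1 : ℝ) else 0)
        ≤ 1 - d11 * (if c ≤ q + γ then (1 : ℝ) else 0)
            - d10 * (if c ≤ q then (1 : ℝ) else 0)) :
    1 - d11 - d10 < a11 + a10 → 0 < (p - q) + |γ| := by
  intro h
  by_contra hc
  push_neg at hc
  have habs1 : γ ≤ |γ| := le_abs_self γ
  have habs2 : -γ ≤ |γ| := neg_le_abs γ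
  have h1 := hineq (max p (p + γ))
  have hp : p ≤ max p (p + γ) := le_max_left _ _
  have hpg : p + γ ≤ max p (p + γ) := le_max_right _ _
  have hq : max p (p + γ) ≤ q := max_le (by linarith) (by linarith)
  have hqg : max p (p + γ) ≤ q + γ := max_le (by linarith) (by linarith)
  rw [if_pos hpg, if_pos hp, if_pos hqg, if_pos hq] at h1
  linarith
end

section
/- Sign identification of the exogenous index in the two-period model: in the two-period binary choice model (T = 2) under partial stationarity, if there exists a value x in the support of the endogenous covariates such that 1 − P(Y_1 = 0 and X_1 = x) < P(Y_2 = 1 and X_2 = x), then (z_2 − z_1)·β₀ > 0; symmetrically, if there exists x such that 1 − P(Y_1 = 1 and X_1 = x) < P(Y_2 = 0 and X_2 = x), then (z_2 − z_1)·β₀ < 0. -/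
open MeasureTheory Matrix

lemma stmt_17_aux_compl {Ω : Type*} [MeasurableSpace Ω] (P : Measure Ω)
    [IsProbabilityMeasure P] {E : Set Ω} (hE : MeasurableSet E) :
    (P E).toReal + (P Eᶜ).toReal = 1 := by
  have h := measure_add_measure_compl (μ := P) hE
  rw [measure_univ] at h
  have h2 := congrArg ENNReal.toReal h
  rwa [ENNReal.toReal_add (measure_ne_top _ _) (measure_ne_top _ _),
    ENNReal.toReal_one] at h2

/-- Sign identification of the exogenous index in the two-period
binary choice model `Y_t = 1{v_t ≤ z_t·β₀ + X_t·γ₀}` (periods `0, 1` standing for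
`1, 2`) under partial stationarity. If there exists a value `x` in the (finite)
support `𝒳` of the endogenous covariates with
`1 − P(Y_1 = 0 ∧ X_1 = x) < P(Y_2 = 1 ∧ X_2 = x)`, then `(z_2 − z_1)·β₀ > 0`;
symmetrically, if there exists `x ∈ 𝒳` with
`1 − P(Y_1 = 1 ∧ X_1 = x) < P(Y_2 = 0 ∧ X_2 = x)`, then `(z_2 − z_1)·β₀ < 0`. -/
theorem stmt_17
    {Ω : Type*} [MeasurableSpace Ω] (P : Measure Ω) [IsProbabilityMeasure P]
    {dz dx : ℕ}
    (z : Fin 2 → (Fin dz → ℝ))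
    (v : Fin 2 → Ω → ℝ) (X : Fin 2 → Ω → (Fin dx → ℝ))
    (hv : ∀ t, Measurable (v t)) (hX : ∀ t, Measurable (X t))
    (𝒳 : Finset (Fin dx → ℝ)) (hsupp : ∀ t ω, X t ω ∈ 𝒳)
    (β₀ : Fin dz → ℝ) (γ₀ : Fin dx → ℝ)
    (Y : Fin 2 → Ω → ℝ)
    (hY : ∀ t ω, Y t ω = if v t ω ≤ z t ⬝ᵥ β₀ + X t ω ⬝ᵥ γ₀ then 1 else 0)
    (hstat : P.map (v 0) = P.map (v 1)) :
    ((∃ x ∈ 𝒳,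
        1 - (P {ω | Y 0 ω = 0 ∧ X 0 ω = x}).toReal
          < (P {ω | Y 1 ω = 1 ∧ X 1 ω = x}).toReal) →
      0 < (z 1 - z 0) ⬝ᵥ β₀) ∧
    ((∃ x ∈ 𝒳,
        1 - (P {ω | Y 0 ω = 1 ∧ X 0 ω = x}).toReal
          < (P {ω | Y 1 ω = 0 ∧ X 1 ω = x}).toReal) →
      (z 1 - z 0) ⬝ᵥ β₀ < 0) := by
  -- stationarity transported to CDFs
  have hmap : ∀ c : ℝ, P {ω | v 1 ω ≤ c} = P {ω | v 0 ω ≤ c} := by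
    intro c
    have h1 : {ω | v 1 ω ≤ c} = v 1 ⁻¹' Set.Iic c := rfl
    have h0 : {ω | v 0 ω ≤ c} = v 0 ⁻¹' Set.Iic c := rfl
    rw [h1, h0, ← Measure.map_apply (hv 1) measurableSet_Iic, ← hstat,
      Measure.map_apply (hv 0) measurableSet_Iic]
  have toReal_mono : ∀ {A B : Set Ω}, A ⊆ B → (P A).toReal ≤ (P B).toReal := by
    intro A B h
    exact ENNReal.toReal_le_toReal (measure_ne_top _ _) (measure_ne_top _ _)
      |>.mpr (measure_mono h)
  constructor
  · rintro ⟨x, -, hlt⟩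
    by_contra hc
    have hc' : z 1 ⬝ᵥ β₀ ≤ z 0 ⬝ᵥ β₀ := by
      have := not_lt.mp hc
      rw [sub_dotProduct] at this
      linarith
    set c0 := z 0 ⬝ᵥ β₀ + x ⬝ᵥ γ₀ with hc0
    set c1 := z 1 ⬝ᵥ β₀ + x ⬝ᵥ γ₀ with hc1
    have hE : MeasurableSet {ω | v 0 ω ≤ c0} := (hv 0) measurableSet_Iic
    -- {Y0 = 0, X0 = x} ⊆ complement of {v0 ≤ c0}
    have hsub0 : {ω | Y 0 ω = 0 ∧ X 0 ω = x} ⊆ {ω | v 0 ω ≤ c0}ᶜ := by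
      rintro ω ⟨h0, hx0⟩
      rw [hY 0 ω] at h0
      intro habs
      rw [if_pos (by rw [hx0]; exact habs)] at h0
      norm_num at h0
    -- {Y1 = 1, X1 = x} ⊆ {v1 ≤ c1}
    have hsub1 : {ω | Y 1 ω = 1 ∧ X 1 ω = x} ⊆ {ω | v 1 ω ≤ c1} := by
      rintro ω ⟨h1, hx1⟩
      rw [hY 1 ω] at h1
      by_contra habs
      rw [if_neg (by rw [hx1]; exact habs)] at h1
      norm_num at h1
    have hmono : {ω | v 0 ω ≤ c1} ⊆ {ω | v 0 ω ≤ c0} := by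
      intro ω h; simp only [Set.mem_setOf_eq, hc0, hc1] at *; linarith
    have h1 : (P {ω | Y 1 ω = 1 ∧ X 1 ω = x}).toReal ≤ (P {ω | v 0 ω ≤ c0}).toReal := by
      calc (P {ω | Y 1 ω = 1 ∧ X 1 ω = x}).toReal
          ≤ (P {ω | v 1 ω ≤ c1}).toReal := toReal_mono hsub1
        _ = (P {ω | v 0 ω ≤ c1}).toReal := by rw [hmap c1]
        _ ≤ (P {ω | v 0 ω ≤ c0}).toReal := toReal_mono hmono
    have h2 : (P {ω | Y 0 ω = 0 ∧ X 0 ω = x}).toReal ≤ (P {ω | v 0 ω ≤ c0}ᶜ).toReal :=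
      toReal_mono hsub0
    have h3 := stmt_17_aux_compl P hE
    linarith
  · rintro ⟨x, -, hlt⟩
    by_contra hc
    have hc' : z 0 ⬝ᵥ β₀ ≤ z 1 ⬝ᵥ β₀ := by
      have := not_lt.mp hc
      rw [sub_dotProduct] at this
      linarith
    set c0 := z 0 ⬝ᵥ β₀ + x ⬝ᵥ γ₀ with hc0
    set c1 := z 1 ⬝ᵥ β₀ + x ⬝ᵥ γ₀ with hc1
    have hE : MeasurableSet {ω | v 0 ω ≤ c0} := (hv 0) measurableSet_Iic
    have hE1 : MeasurableSet {ω | v 1 ω ≤ c1} := (hv 1) measurableSet_Iic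
    -- {Y0 = 1, X0 = x} ⊆ {v0 ≤ c0}
    have hsub0 : {ω | Y 0 ω = 1 ∧ X 0 ω = x} ⊆ {ω | v 0 ω ≤ c0} := by
      rintro ω ⟨h0, hx0⟩
      rw [hY 0 ω] at h0
      by_contra habs
      rw [if_neg (by rw [hx0]; exact habs)] at h0
      norm_num at h0
    -- {Y1 = 0, X1 = x} ⊆ complement of {v1 ≤ c1}
    have hsub1 : {ω | Y 1 ω = 0 ∧ X 1 ω = x} ⊆ {ω | v 1 ω ≤ c1}ᶜ := by
      rintro ω ⟨h1, hx1⟩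
      rw [hY 1 ω] at h1
      intro habs
      rw [if_pos (by rw [hx1]; exact habs)] at h1
      norm_num at h1
    have hmono : {ω | v 0 ω ≤ c0} ⊆ {ω | v 0 ω ≤ c1} := by
      intro ω h; simp only [Set.mem_setOf_eq, hc0, hc1] at *; linarith
    have h1 : (P {ω | Y 1 ω = 0 ∧ X 1 ω = x}).toReal ≤ (P {ω | v 1 ω ≤ c1}ᶜ).toReal :=
      toReal_mono hsub1
    have h2 : (P {ω | Y 0 ω = 1 ∧ X 0 ω = x}).toReal ≤ (P {ω | v 0 ω ≤ c0}).toReal :=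
      toReal_mono hsub0
    have h3 := stmt_17_aux_compl P hE1
    have h4 : (P {ω | v 0 ω ≤ c0}).toReal ≤ (P {ω | v 1 ω ≤ c1}).toReal := by
      rw [hmap c1]; exact toReal_mono hmono
    linarith
end

section
/- Point identification of β₀ up to scale under the support condition: let Δ𝒵 ⊆ ℝ^{d} and β₀ ∈ ℝ^{d} satisfy: (1) Δ𝒵 is not contained in any proper linear subspace of ℝ^{d}; and (2) there exists a coordinate j* with β₀_{j*} ≠ 0 such that for every δ ∈ Δ𝒵 and every r ∈ ℝ, the vector obtained from δ by replacing its j*-th coordinate with r also lies in Δ𝒵 (the conditional support of the j*-th coordinate is all of ℝ). If b ∈ ℝ^{d} satisfies the sign-agreement condition (δ·b > 0 ⟺ δ·β₀ > 0) for every δ ∈ Δ𝒵, then b = k·β₀ for some scalar k > 0. Hence β₀ is point identified up to scale from the identified signs δ ↦ sign(δ·β₀) on Δ𝒵. -/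
open Matrix

/-- Auxiliary: if two affine functions of `t` agree in the sign of positivity for
all `t`, and the second has nonzero slope, then the slopes have the same sign and
the "roots" agree: `A*E = C*B`. -/
lemma affine_sign_agree {A B C E : ℝ} (hE : E ≠ 0)
    (h : ∀ t : ℝ, 0 < A + t * B ↔ 0 < C + t * E) :
    0 < B * E ∧ A * E = C * B := by
  set x1 : ℝ := (1 - C) / E with hx1def
  set x2 : ℝ := (-1 - C) / E with hx2def
  have hx1 : C + x1 * E = 1 := by rw [hx1def]; field_simp; ring
  have hx2 : C + x2 * E = -1 := by rw [hx2def]; field_simp; ring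
  have hB1 : 0 < A + x1 * B := (h x1).mpr (by rw [hx1]; norm_num)
  have hB2 : A + x2 * B ≤ 0 := by
    by_contra hc
    push_neg at hc
    have := (h x2).mp hc
    rw [hx2] at this; linarith
  have hdiff : 0 < (x1 - x2) * B := by nlinarith
  have hsE : (x1 - x2) * E = 2 := by
    rw [hx1def, hx2def]; field_simp; ring
  have hs2 : 0 < (x1 - x2) ^ 2 * (B * E) := by
    have h' := mul_pos hdiff (show (0:ℝ) < (x1 - x2) * E by rw [hsE]; norm_num)
    nlinarith [h']
  have hBE : 0 < B * E := by nlinarith [hs2, sq_nonneg (x1 - x2)]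
  have hB : B ≠ 0 := by
    intro h0; rw [h0, zero_mul] at hBE; exact lt_irrefl 0 hBE
  have i1 : C + (-A / B) * E ≤ 0 := by
    by_contra hc
    push_neg at hc
    have h0 : A + (-A / B) * B = 0 := by field_simp; ring
    linarith [(h (-A / B)).mpr hc, h0]
  have i2 : A + (-C / E) * B ≤ 0 := by
    by_contra hc
    push_neg at hc
    have h0 : C + (-C / E) * E = 0 := by field_simp; ring
    linarith [(h (-C / E)).mp hc, h0]
  have j1 : (C * B - A * E) * B ≤ 0 := by
    have hm := mul_nonpos_of_nonpos_of_nonneg i1 (sq_nonneg B)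
    have heq : (C + (-A / B) * E) * B ^ 2 = (C * B - A * E) * B := by
      field_simp; ring
    linarith [heq ▸ hm]
  have j2 : (A * E - C * B) * E ≤ 0 := by
    have hm := mul_nonpos_of_nonpos_of_nonneg i2 (sq_nonneg E)
    have heq : (A + (-C / E) * B) * E ^ 2 = (A * E - C * B) * E := by
      field_simp; ring
    linarith [heq ▸ hm]
  refine ⟨hBE, ?_⟩
  rcases lt_trichotomy (A * E) (C * B) with hlt | heq | hgt
  · nlinarith
  · exact heq
  · nlinarith

/-- Point identification of `β₀` up to scale under the support
condition. Let `Δ𝒵 ⊆ ℝ^d` satisfy: (1) `Δ𝒵` is not contained in any proper linear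
subspace of `ℝ^d`; (2) there is a coordinate `j*` with `β₀_{j*} ≠ 0` whose
conditional support is all of `ℝ` (replacing the `j*`-th coordinate of any `δ ∈ Δ𝒵`
by any real keeps it in `Δ𝒵`). If `b` satisfies the sign-agreement condition
`δ·b > 0 ⟺ δ·β₀ > 0` for every `δ ∈ Δ𝒵`, then `b = k·β₀` for some scalar `k > 0`. -/
theorem stmt_18
    {d : ℕ} (D : Set (Fin d → ℝ)) (β₀ : Fin d → ℝ)
    (h1 : ∀ S : Submodule ℝ (Fin d → ℝ), S ≠ ⊤ → ¬(D ⊆ (S : Set (Fin d → ℝ))))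
    (h2 : ∃ j : Fin d, β₀ j ≠ 0 ∧ ∀ δ ∈ D, ∀ r : ℝ, Function.update δ j r ∈ D)
    (b : Fin d → ℝ)
    (hsign : ∀ δ ∈ D, (0 < δ ⬝ᵥ b ↔ 0 < δ ⬝ᵥ β₀)) :
    ∃ k : ℝ, 0 < k ∧ b = k • β₀ := by
  obtain ⟨j, hβj, hupd⟩ := h2
  -- dot product of an update
  have hdot : ∀ (δ v : Fin d → ℝ) (r : ℝ),
      (Function.update δ j r) ⬝ᵥ v = (δ ⬝ᵥ v - δ j * v j) + r * v j := by
    intro δ v r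
    have hterm : ∀ i, Function.update δ j r i * v i
        = δ i * v i + (if i = j then (r - δ j) * v j else 0) := by
      intro i
      by_cases hi : i = j
      · subst hi; simp [Function.update_self]; ring
      · simp [Function.update_of_ne hi, hi]
    simp only [dotProduct, hterm, Finset.sum_add_distrib, Finset.sum_ite_eq',
      Finset.mem_univ, if_true]
    ring
  -- key pointwise identity on D
  have hkey : ∀ δ ∈ D, (δ ⬝ᵥ b) * β₀ j = (δ ⬝ᵥ β₀) * b j ∧ 0 < b j * β₀ j := by
    intro δ hδ
    have hA : ∀ t : ℝ, 0 < (δ ⬝ᵥ b - δ j * b j) + t * b j ↔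
        0 < (δ ⬝ᵥ β₀ - δ j * β₀ j) + t * β₀ j := by
      intro t
      have := hsign _ (hupd δ hδ t)
      rwa [hdot δ b t, hdot δ β₀ t] at this
    obtain ⟨hBE, hAE⟩ := affine_sign_agree hβj hA
    exact ⟨by nlinarith [hAE], hBE⟩
  -- D is nonempty
  have hDne : D.Nonempty := by
    by_contra hne
    rw [Set.not_nonempty_iff_eq_empty] at hne
    have hbot : (⊥ : Submodule ℝ (Fin d → ℝ)) ≠ ⊤ := by
      intro hc
      have hmem : (Pi.single j (1:ℝ) : Fin d → ℝ) ∈ (⊥ : Submodule ℝ (Fin d → ℝ)) := by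
        rw [hc]; trivial
      rw [Submodule.mem_bot] at hmem
      have := congrFun hmem j
      simp at this
    exact h1 ⊥ hbot (by rw [hne]; exact Set.empty_subset _)
  obtain ⟨δ₀, hδ₀⟩ := hDne
  have hBE := (hkey δ₀ hδ₀).2
  set k : ℝ := b j / β₀ j with hkdef
  have hk : 0 < k := by
    have hkk : k = b j * β₀ j / (β₀ j) ^ 2 := by rw [hkdef]; field_simp
    rw [hkk]; positivity
  refine ⟨k, hk, ?_⟩
  by_contra hne
  set v : Fin d → ℝ := b - k • β₀ with hvdef
  have hvne : v ≠ 0 := fun h => hne (sub_eq_zero.mp (hvdef ▸ h))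
  let f : (Fin d → ℝ) →ₗ[ℝ] ℝ :=
    { toFun := fun x => x ⬝ᵥ v
      map_add' := fun x y => add_dotProduct x y v
      map_smul' := fun c x => smul_dotProduct c x v }
  have hS : D ⊆ (LinearMap.ker f : Set (Fin d → ℝ)) := by
    intro δ hδ
    obtain ⟨hAE, -⟩ := hkey δ hδ
    have hdv : δ ⬝ᵥ v = δ ⬝ᵥ b - k * (δ ⬝ᵥ β₀) := by
      rw [hvdef, dotProduct_sub, dotProduct_smul, smul_eq_mul]
    have hz : δ ⬝ᵥ b - k * (δ ⬝ᵥ β₀) = 0 := by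
      rw [hkdef]
      field_simp
      linarith [hAE]
    simp only [SetLike.mem_coe, LinearMap.mem_ker]
    show δ ⬝ᵥ v = 0
    rw [hdv, hz]
  have hSne : LinearMap.ker f ≠ ⊤ := by
    intro hc
    have hv : v ∈ LinearMap.ker f := by rw [hc]; trivial
    rw [LinearMap.mem_ker] at hv
    have hvv : v ⬝ᵥ v = 0 := hv
    exact hvne (by rwa [dotProduct_self_eq_zero] at hvv)
  exact h1 _ hSne hS
end

section
/- Bounding and sign identification of the endogenous coefficient: in the two-period binary choice model (T = 2) under partial stationarity, fix a coordinate j ∈ {1, …, d_x}. If there exist values x₁, x₂ in the support of the endogenous covariates with x₁ⱼ ≠ x₂ⱼ and x₁ₘ = x₂ₘ for all m ≠ j, such that 1 − P(Y_1 = 0 and X_1 = x₁) < P(Y_2 = 1 and X_2 = x₂), then (x₁ⱼ − x₂ⱼ)·γ₀ⱼ < (z_2 − z_1)·β₀; symmetrically, if there exist such x₁, x₂ with 1 − P(Y_1 = 1 and X_1 = x₁) < P(Y_2 = 0 and X_2 = x₂), then (x₁ⱼ − x₂ⱼ)·γ₀ⱼ > (z_2 − z_1)·β₀. In particular, when the sign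 of (z_2 − z_1)·β₀ is identified as negative in the first case (or positive in the second case), the sign of γ₀ⱼ is identified. -/
open MeasureTheory Matrix

private lemma stmt19_keyF {Ω : Type*} [MeasurableSpace Ω] (P : Measure Ω) [IsProbabilityMeasure P]
    (v0 v1 : Ω → ℝ) (hv0 : Measurable v0) (hv1 : Measurable v1)
    (hstat : P.map v0 = P.map v1) (c₁ c₂ : ℝ)
    (A B : Set Ω) (hA : MeasurableSet A)
    (hAc : {ω | v0 ω ≤ c₁} ⊆ Aᶜ) (hBs : B ⊆ {ω | v1 ω ≤ c₂})
    (h : 1 - (P A).toReal < (P B).toReal) : c₁ < c₂ := by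
  have hmap : P {ω | v1 ω ≤ c₂} = P {ω | v0 ω ≤ c₂} := by
    have h0 : P.map v0 (Set.Iic c₂) = P.map v1 (Set.Iic c₂) := by rw [hstat]
    rwa [Measure.map_apply hv0 measurableSet_Iic,
      Measure.map_apply hv1 measurableSet_Iic, eq_comm] at h0
  have h1 : (P {ω | v0 ω ≤ c₁}).toReal ≤ 1 - (P A).toReal := by
    have hm : P _ ≤ P Aᶜ := measure_mono hAc
    rw [prob_compl_eq_one_sub hA] at hm
    have := ENNReal.toReal_mono (by simp [measure_ne_top]) hm
    rwa [ENNReal.toReal_sub_of_le prob_le_one (by simp), ENNReal.toReal_one] at this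
  have h2 : (P B).toReal ≤ (P {ω | v0 ω ≤ c₂}).toReal := by
    rw [← hmap]
    exact ENNReal.toReal_mono (measure_ne_top _ _) (measure_mono hBs)
  by_contra hc
  push_neg at hc
  have : P {ω | v0 ω ≤ c₂} ≤ P {ω | v0 ω ≤ c₁} :=
    measure_mono (fun ω hω => le_trans hω hc)
  have := ENNReal.toReal_mono (measure_ne_top _ _) this
  linarith

private lemma stmt19_keyG {Ω : Type*} [MeasurableSpace Ω] (P : Measure Ω) [IsProbabilityMeasure P]
    (v0 v1 : Ω → ℝ) (hv0 : Measurable v0) (hv1 : Measurable v1)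
    (hstat : P.map v0 = P.map v1) (c₁ c₂ : ℝ)
    (A B : Set Ω) (hA : MeasurableSet A)
    (hAc : {ω | c₁ < v0 ω} ⊆ Aᶜ) (hBs : B ⊆ {ω | c₂ < v1 ω})
    (h : 1 - (P A).toReal < (P B).toReal) : c₂ < c₁ := by
  have hmap : P {ω | c₂ < v1 ω} = P {ω | c₂ < v0 ω} := by
    have h0 : P.map v0 (Set.Ioi c₂) = P.map v1 (Set.Ioi c₂) := by rw [hstat]
    rwa [Measure.map_apply hv0 measurableSet_Ioi,
      Measure.map_apply hv1 measurableSet_Ioi, eq_comm] at h0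
  have h1 : (P {ω | c₁ < v0 ω}).toReal ≤ 1 - (P A).toReal := by
    have hm : P _ ≤ P Aᶜ := measure_mono hAc
    rw [prob_compl_eq_one_sub hA] at hm
    have := ENNReal.toReal_mono (by simp [measure_ne_top]) hm
    rwa [ENNReal.toReal_sub_of_le prob_le_one (by simp), ENNReal.toReal_one] at this
  have h2 : (P B).toReal ≤ (P {ω | c₂ < v0 ω}).toReal := by
    rw [← hmap]
    exact ENNReal.toReal_mono (measure_ne_top _ _) (measure_mono hBs)
  by_contra hc
  push_neg at hc
  have : P {ω | c₂ < v0 ω} ≤ P {ω | c₁ < v0 ω} :=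
    measure_mono (fun ω hω => lt_of_le_of_lt hc hω)
  have := ENNReal.toReal_mono (measure_ne_top _ _) this
  linarith

private lemma stmt19_dotdiff {dx : ℕ} (x₁ x₂ γ₀ : Fin dx → ℝ) (j : Fin dx)
    (hm : ∀ m : Fin dx, m ≠ j → x₁ m = x₂ m) :
    x₁ ⬝ᵥ γ₀ - x₂ ⬝ᵥ γ₀ = (x₁ j - x₂ j) * γ₀ j := by
  rw [dotProduct, dotProduct, ← Finset.sum_sub_distrib]
  rw [Finset.sum_eq_single j]
  · ring
  · intro m _ hmj
    rw [hm m hmj]; ring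
  · intro h; exact absurd (Finset.mem_univ j) h

/-- Bounding and sign identification of the endogenous coefficient in
the two-period binary choice model `Y_t = 1{v_t ≤ z_t·β₀ + X_t·γ₀}` (periods `0, 1`
standing for `1, 2`) under partial stationarity. Fix a coordinate `j`. For any
`x₁, x₂` in the (finite) support `𝒳` of the endogenous covariates with `x₁ⱼ ≠ x₂ⱼ`
and `x₁ₘ = x₂ₘ` for `m ≠ j`: if
`1 − P(Y_1 = 0 ∧ X_1 = x₁) < P(Y_2 = 1 ∧ X_2 = x₂)` then
`(x₁ⱼ − x₂ⱼ)·γ₀ⱼ < (z_2 − z_1)·β₀`; symmetrically, if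
`1 − P(Y_1 = 1 ∧ X_1 = x₁) < P(Y_2 = 0 ∧ X_2 = x₂)` then
`(x₁ⱼ − x₂ⱼ)·γ₀ⱼ > (z_2 − z_1)·β₀`. (When the sign of `(z_2 − z_1)·β₀` is identified
as negative in the first case, or positive in the second, the sign of `γ₀ⱼ` is
identified.) -/
theorem stmt_19
    {Ω : Type*} [MeasurableSpace Ω] (P : Measure Ω) [IsProbabilityMeasure P]
    {dz dx : ℕ}
    (z : Fin 2 → (Fin dz → ℝ))
    (v : Fin 2 → Ω → ℝ) (X : Fin 2 → Ω → (Fin dx → ℝ))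
    (hv : ∀ t, Measurable (v t)) (hX : ∀ t, Measurable (X t))
    (𝒳 : Finset (Fin dx → ℝ)) (hsupp : ∀ t ω, X t ω ∈ 𝒳)
    (β₀ : Fin dz → ℝ) (γ₀ : Fin dx → ℝ)
    (Y : Fin 2 → Ω → ℝ)
    (hY : ∀ t ω, Y t ω = if v t ω ≤ z t ⬝ᵥ β₀ + X t ω ⬝ᵥ γ₀ then 1 else 0)
    (hstat : P.map (v 0) = P.map (v 1))
    (j : Fin dx) :
    (∀ x₁ x₂ : Fin dx → ℝ, x₁ ∈ 𝒳 → x₂ ∈ 𝒳 →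
      x₁ j ≠ x₂ j → (∀ m : Fin dx, m ≠ j → x₁ m = x₂ m) →
      1 - (P {ω | Y 0 ω = 0 ∧ X 0 ω = x₁}).toReal
          < (P {ω | Y 1 ω = 1 ∧ X 1 ω = x₂}).toReal →
      (x₁ j - x₂ j) * γ₀ j < (z 1 - z 0) ⬝ᵥ β₀) ∧
    (∀ x₁ x₂ : Fin dx → ℝ, x₁ ∈ 𝒳 → x₂ ∈ 𝒳 →
      x₁ j ≠ x₂ j → (∀ m : Fin dx, m ≠ j → x₁ m = x₂ m) →
      1 - (P {ω | Y 0 ω = 1 ∧ X 0 ω = x₁}).toReal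
          < (P {ω | Y 1 ω = 0 ∧ X 1 ω = x₂}).toReal →
      (z 1 - z 0) ⬝ᵥ β₀ < (x₁ j - x₂ j) * γ₀ j) := by
  have hzsub : (z 1 - z 0) ⬝ᵥ β₀ = z 1 ⬝ᵥ β₀ - z 0 ⬝ᵥ β₀ := sub_dotProduct _ _ _
  constructor
  · intro x₁ x₂ _ _ _ hm h
    set c₁ : ℝ := z 0 ⬝ᵥ β₀ + x₁ ⬝ᵥ γ₀ with hc₁
    set c₂ : ℝ := z 1 ⬝ᵥ β₀ + x₂ ⬝ᵥ γ₀ with hc₂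
    have hA : MeasurableSet {ω | Y 0 ω = 0 ∧ X 0 ω = x₁} := by
      have hset : {ω | Y 0 ω = 0 ∧ X 0 ω = x₁}
          = X 0 ⁻¹' {x₁} ∩ v 0 ⁻¹' Set.Ioi c₁ := by
        ext ω
        simp only [Set.mem_setOf_eq, Set.mem_inter_iff, Set.mem_preimage,
          Set.mem_singleton_iff, Set.mem_Ioi, hY]
        constructor
        · rintro ⟨h0, hx⟩
          refine ⟨hx, ?_⟩
          rw [hx] at h0
          by_contra hcc
          push_neg at hcc
          rw [if_pos hcc] at h0
          norm_num at h0
        · rintro ⟨hx, hlt⟩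
          rw [hx]
          exact ⟨by rw [if_neg (not_le.mpr hlt)], rfl⟩
      rw [hset]
      exact ((hX 0) (measurableSet_singleton x₁)).inter ((hv 0) measurableSet_Ioi)
    have hAc : {ω | v 0 ω ≤ c₁} ⊆ {ω | Y 0 ω = 0 ∧ X 0 ω = x₁}ᶜ := by
      intro ω hω
      rw [Set.mem_setOf_eq] at hω
      rintro ⟨h0, hx⟩
      rw [hY 0 ω, hx, if_pos hω] at h0
      norm_num at h0
    have hBs : {ω | Y 1 ω = 1 ∧ X 1 ω = x₂} ⊆ {ω | v 1 ω ≤ c₂} := by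
      rintro ω ⟨h1, hx⟩
      rw [hY 1 ω, hx] at h1
      by_contra hcc
      rw [Set.mem_setOf_eq] at hcc
      rw [if_neg hcc] at h1
      norm_num at h1
    have := stmt19_keyF P (v 0) (v 1) (hv 0) (hv 1) hstat c₁ c₂ _ _ hA hAc hBs h
    have hd := stmt19_dotdiff x₁ x₂ γ₀ j hm
    rw [hzsub]
    rw [hc₁, hc₂] at this
    linarith
  · intro x₁ x₂ _ _ _ hm h
    set c₁ : ℝ := z 0 ⬝ᵥ β₀ + x₁ ⬝ᵥ γ₀ with hc₁
    set c₂ : ℝ := z 1 ⬝ᵥ β₀ + x₂ ⬝ᵥ γ₀ with hc₂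
    have hA : MeasurableSet {ω | Y 0 ω = 1 ∧ X 0 ω = x₁} := by
      have hset : {ω | Y 0 ω = 1 ∧ X 0 ω = x₁}
          = X 0 ⁻¹' {x₁} ∩ v 0 ⁻¹' Set.Iic c₁ := by
        ext ω
        simp only [Set.mem_setOf_eq, Set.mem_inter_iff, Set.mem_preimage,
          Set.mem_singleton_iff, Set.mem_Iic, hY]
        constructor
        · rintro ⟨h0, hx⟩
          refine ⟨hx, ?_⟩
          rw [hx] at h0
          by_contra hcc
          push_neg at hcc
          rw [if_neg (not_le.mpr hcc)] at h0
          norm_num at h0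
        · rintro ⟨hx, hle⟩
          rw [hx]
          exact ⟨by rw [if_pos hle], rfl⟩
      rw [hset]
      exact ((hX 0) (measurableSet_singleton x₁)).inter ((hv 0) measurableSet_Iic)
    have hAc : {ω | c₁ < v 0 ω} ⊆ {ω | Y 0 ω = 1 ∧ X 0 ω = x₁}ᶜ := by
      intro ω hω
      rw [Set.mem_setOf_eq] at hω
      rintro ⟨h0, hx⟩
      rw [hY 0 ω, hx, if_neg (not_le.mpr hω)] at h0
      norm_num at h0
    have hBs : {ω | Y 1 ω = 0 ∧ X 1 ω = x₂} ⊆ {ω | c₂ < v 1 ω} := by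
      rintro ω ⟨h1, hx⟩
      rw [hY 1 ω, hx] at h1
      by_contra hcc
      rw [Set.mem_setOf_eq, not_lt] at hcc
      rw [if_pos hcc] at h1
      norm_num at h1
    have := stmt19_keyG P (v 0) (v 1) (hv 0) (hv 1) hstat c₁ c₂ _ _ hA hAc hBs h
    have hd := stmt19_dotdiff x₁ x₂ γ₀ j hm
    rw [hzsub]
    rw [hc₁, hc₂] at this
    linarith
end
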